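/- Let S be a nonempty finite set and T : S → S → ℝ a row-stochastic matrix (all entries nonnegative and each row sums to 1). Then the Cesaro averages T^{(t)} := (1/t) Σ_{k=0}^{t-1} T^k converge entrywise as t → ∞; i.e., there exists a matrix Π : S → S → ℝ such that for all s, s' ∈ S, lim_{t→∞} (1/t) Σ_{k=0}^{t-1} (T^k) s s' = Π s s'. -/

import Mathlib

open Filter Topology

instance matrixFirstCountable {S : Type*} [Fintype S] :
    FirstCountableTopology (Matrix S S ℝ) :=
  inferInstanceAs (FirstCountableTopology (S → S → ℝ))

/-- **Cesaro averages of a finite row-stochastic matrix converge entrywise.**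
Let `S` be a nonempty finite set and `T : S → S → ℝ` a row-stochastic matrix. Then there is a
matrix `P` such that for all `s s'`, `(1/t) * ∑_{k<t} (T^k) s s' → P s s'` as `t → ∞`. -/
theorem cesaro_limit_exists {S : Type*} [Fintype S] [Nonempty S] [DecidableEq S]
    (T : Matrix S S ℝ)
    (hnn : ∀ s s', 0 ≤ T s s') (hrow : ∀ s, ∑ s', T s s' = 1) :
    ∃ P : Matrix S S ℝ, ∀ s s' : S,
      Tendsto (fun t : ℕ => (t : ℝ)⁻¹ * ∑ k ∈ Finset.range t, (T ^ k) s s')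
        atTop (nhds (P s s')) := by
  classical
  set A : ℕ → Matrix S S ℝ := fun t => (t : ℝ)⁻¹ • ∑ k ∈ Finset.range t, T ^ k with hAdef
  have hAentry : ∀ t s s', A t s s' = (t : ℝ)⁻¹ * ∑ k ∈ Finset.range t, (T ^ k) s s' := by
    intro t s s'
    simp [hAdef, Matrix.smul_apply, Matrix.sum_apply]
  -- basic facts about powers of T
  have hpow : ∀ k : ℕ, (∀ s s', 0 ≤ (T ^ k) s s') ∧ (∀ s, ∑ s', (T ^ k) s s' = 1) := by
    intro k
    induction k with
    | zero =>
      refine ⟨fun s s' => ?_, fun s => ?_⟩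
      · simp only [pow_zero, Matrix.one_apply]
        split <;> norm_num
      · simp [Matrix.one_apply]
    | succ k ih =>
      refine ⟨fun s s' => ?_, fun s => ?_⟩
      · rw [pow_succ, Matrix.mul_apply]
        exact Finset.sum_nonneg fun u _ => mul_nonneg (ih.1 s u) (hnn u s')
      · rw [pow_succ]
        simp only [Matrix.mul_apply]
        rw [Finset.sum_comm]
        simp only [← Finset.mul_sum, hrow, mul_one]
        exact ih.2 s
  have hpow_le : ∀ k s s', (T ^ k) s s' ≤ 1 := by
    intro k s s'
    calc (T ^ k) s s' ≤ ∑ u, (T ^ k) s u :=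
          Finset.single_le_sum (fun u _ => (hpow k).1 s u) (Finset.mem_univ s')
      _ = 1 := (hpow k).2 s
  -- the compact set of [0,1]-entry matrices
  set K : Set (Matrix S S ℝ) :=
    Set.univ.pi fun _ : S => Set.univ.pi fun _ : S => Set.Icc (0 : ℝ) 1 with hKdef
  have hKcomp : IsCompact K :=
    isCompact_univ_pi fun _ => isCompact_univ_pi fun _ => isCompact_Icc
  have hmemA : ∀ t, A t ∈ K := by
    intro t
    rw [hKdef]; refine Set.mem_univ_pi.2 ?_
    intro s
    rw [Set.mem_univ_pi]
    intro s'
    rw [Set.mem_Icc, hAentry]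
    rcases Nat.eq_zero_or_pos t with ht | ht
    · simp [ht]
    constructor
    · exact mul_nonneg (by positivity) (Finset.sum_nonneg fun k _ => (hpow k).1 s s')
    · have hsum : ∑ k ∈ Finset.range t, (T ^ k) s s' ≤ (t : ℝ) := by
        calc ∑ k ∈ Finset.range t, (T ^ k) s s' ≤ ∑ k ∈ Finset.range t, (1 : ℝ) :=
              Finset.sum_le_sum fun k _ => hpow_le k s s'
          _ = (t : ℝ) := by simp
      have htpos : (0 : ℝ) < t := by exact_mod_cast ht
      calc (t : ℝ)⁻¹ * ∑ k ∈ Finset.range t, (T ^ k) s s' ≤ (t : ℝ)⁻¹ * t := by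
            gcongr
        _ = 1 := inv_mul_cancel₀ htpos.ne'
  -- the shift identity : A t * T = A t + t⁻¹ • (T^t - 1)
  have hshift : ∀ t : ℕ, A t * T = A t + (t : ℝ)⁻¹ • (T ^ t - 1) := by
    intro t
    have key : (∑ k ∈ Finset.range t, T ^ k) * T
        = (∑ k ∈ Finset.range t, T ^ k) + (T ^ t - 1) := by
      rw [Finset.sum_mul]
      simp only [← pow_succ]
      have h1 := Finset.sum_range_succ' (fun i => T ^ i) t
      have h2 := Finset.sum_range_succ (fun i => T ^ i) t
      have h3 : (∑ k ∈ Finset.range t, T ^ (k + 1)) + T ^ 0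
          = (∑ i ∈ Finset.range t, T ^ i) + T ^ t := h1.symm.trans h2
      rw [pow_zero] at h3
      have := eq_sub_of_add_eq h3
      rw [this]; abel
    rw [hAdef]
    simp only [smul_mul_assoc, key, smul_add]
  -- T commutes with A t
  have hcomm : ∀ t, A t * T = T * A t := by
    intro t
    simp only [hAdef, smul_mul_assoc, mul_smul_comm]
    congr 1
    rw [Finset.sum_mul, Finset.mul_sum]
    exact Finset.sum_congr rfl fun k _ => by rw [← pow_succ, ← pow_succ']
  -- the error term tends to zero along any sequence tending to infinity
  have hzero : ∀ ns : ℕ → ℕ, Tendsto ns atTop atTop →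
      Tendsto (fun n => ((ns n : ℝ))⁻¹ • (T ^ (ns n) - 1)) atTop (𝓝 (0 : Matrix S S ℝ)) := by
    intro ns hns
    have hinv : Tendsto (fun n => ((ns n : ℝ))⁻¹) atTop (𝓝 0) :=
      tendsto_inv_atTop_zero.comp (tendsto_natCast_atTop_atTop.comp hns)
    refine tendsto_pi_nhds.2 fun s => tendsto_pi_nhds.2 fun s' => ?_
    simp only [Matrix.smul_apply, Matrix.sub_apply, smul_eq_mul, Matrix.zero_apply]
    have hb : ∀ n, ‖((ns n : ℝ))⁻¹ * ((T ^ (ns n)) s s' - (1 : Matrix S S ℝ) s s')‖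
        ≤ ((ns n : ℝ))⁻¹ := by
      intro n
      have h1 : |(T ^ (ns n)) s s' - (1 : Matrix S S ℝ) s s'| ≤ 1 := by
        have e0 : (0 : ℝ) ≤ (1 : Matrix S S ℝ) s s' := by
          simp only [Matrix.one_apply]; split <;> norm_num
        have e1 : (1 : Matrix S S ℝ) s s' ≤ 1 := by
          simp only [Matrix.one_apply]; split <;> norm_num
        have := (hpow (ns n)).1 s s'
        have := hpow_le (ns n) s s'
        rw [abs_le]; constructor <;> linarith
      rw [norm_mul, Real.norm_eq_abs, Real.norm_eq_abs, abs_inv, Nat.abs_cast]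
      calc ((ns n : ℝ))⁻¹ * |(T ^ (ns n)) s s' - (1 : Matrix S S ℝ) s s'|
          ≤ ((ns n : ℝ))⁻¹ * 1 := by gcongr
        _ = ((ns n : ℝ))⁻¹ := mul_one _
    exact squeeze_zero_norm hb hinv
  -- any subsequential limit R of A satisfies R * T = R and T * R = R
  have hfix : ∀ ns : ℕ → ℕ, Tendsto ns atTop atTop → ∀ R : Matrix S S ℝ,
      Tendsto (fun n => A (ns n)) atTop (𝓝 R) → R * T = R ∧ T * R = R := by
    intro ns hns R hR
    have h2 : Tendsto (fun n => A (ns n) * T) atTop (𝓝 R) := by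
      have : Tendsto (fun n => A (ns n) + ((ns n : ℝ))⁻¹ • (T ^ (ns n) - 1)) atTop
          (𝓝 (R + 0)) := hR.add (hzero ns hns)
      rw [add_zero] at this
      simpa only [hshift] using this
    have h1 : Tendsto (fun n => A (ns n) * T) atTop (𝓝 (R * T)) :=
      hR.mul tendsto_const_nhds
    have h3 : Tendsto (fun n => A (ns n) * T) atTop (𝓝 (T * R)) := by
      simp only [hcomm]
      exact tendsto_const_nhds.mul hR
    exact ⟨tendsto_nhds_unique h1 h2, tendsto_nhds_unique h3 h2⟩
  -- R * T = R implies R * A t = R for t ≥ 1, and symmetrically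
  have hRA : ∀ R : Matrix S S ℝ, R * T = R → ∀ t : ℕ, 1 ≤ t → R * A t = R := by
    intro R hR t ht
    have hk : ∀ k : ℕ, R * T ^ k = R := by
      intro k
      induction k with
      | zero => simp
      | succ k ih => rw [pow_succ, ← mul_assoc, ih, hR]
    have htne : ((t : ℝ)) ≠ 0 := by
      have : (0 : ℝ) < t := by exact_mod_cast ht
      exact this.ne'
    rw [hAdef]
    simp only [mul_smul_comm, Finset.mul_sum, hk, Finset.sum_const, Finset.card_range]
    rw [← Nat.cast_smul_eq_nsmul ℝ, smul_smul, inv_mul_cancel₀ htne, one_smul]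
  have hAR : ∀ R : Matrix S S ℝ, T * R = R → ∀ t : ℕ, 1 ≤ t → A t * R = R := by
    intro R hR t ht
    have hk : ∀ k : ℕ, T ^ k * R = R := by
      intro k
      induction k with
      | zero => simp
      | succ k ih => rw [pow_succ', mul_assoc, ih, hR]
    have htne : ((t : ℝ)) ≠ 0 := by
      have : (0 : ℝ) < t := by exact_mod_cast ht
      exact this.ne'
    rw [hAdef]
    simp only [smul_mul_assoc, Finset.sum_mul, hk, Finset.sum_const, Finset.card_range]
    rw [← Nat.cast_smul_eq_nsmul ℝ, smul_smul, inv_mul_cancel₀ htne, one_smul]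
  -- A's commute with each other
  have hAAcomm : ∀ a b : ℕ, A a * A b = A b * A a := by
    intro a b
    have hc : Commute (∑ j ∈ Finset.range a, T ^ j) (∑ k ∈ Finset.range b, T ^ k) :=
      Commute.sum_left _ _ _ fun j _ =>
        Commute.sum_right _ _ _ fun k _ => Commute.pow_pow_self T j k
    simp only [hAdef, smul_mul_assoc, mul_smul_comm]
    rw [hc.eq, smul_comm]
  -- extract the principal limit point P
  obtain ⟨P, hPK, φ, hφ, hAφ⟩ := hKcomp.tendsto_subseq hmemA
  have hφt : Tendsto φ atTop atTop := hφ.tendsto_atTop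
  obtain ⟨hPT, hTP⟩ := hfix φ hφt P hAφ
  refine ⟨P, fun s s' => ?_⟩
  suffices h : Tendsto A atTop (𝓝 P) by
    have h1 := tendsto_pi_nhds.1 (tendsto_pi_nhds.1 h s) s'
    simpa only [hAentry] using h1
  refine tendsto_of_subseq_tendsto fun ns hns => ?_
  obtain ⟨Q, hQK, ms, hms, hQ⟩ := hKcomp.tendsto_subseq fun n => hmemA (ns n)
  have hnsms : Tendsto (fun m => ns (ms m)) atTop atTop := hns.comp hms.tendsto_atTop
  have hQ' : Tendsto (fun m => A (ns (ms m))) atTop (𝓝 Q) := hQ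
  obtain ⟨hQT, hTQ⟩ := hfix _ hnsms Q hQ'
  -- P * Q = P
  have h1 : Tendsto (fun m => P * A (ns (ms m))) atTop (𝓝 (P * Q)) :=
    tendsto_const_nhds.mul hQ'
  have h2 : Tendsto (fun m => P * A (ns (ms m))) atTop (𝓝 P) := by
    refine (tendsto_const_nhds : Tendsto (fun _ : ℕ => P) atTop (𝓝 P)).congr' ?_
    filter_upwards [hnsms.eventually_ge_atTop 1] with m hm
    exact (hRA P hPT _ hm).symm
  have hPQ : P * Q = P := tendsto_nhds_unique h1 h2
  -- Q * P = Q
  have h1' : Tendsto (fun n => Q * A (φ n)) atTop (𝓝 (Q * P)) :=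
    tendsto_const_nhds.mul hAφ
  have h2' : Tendsto (fun n => Q * A (φ n)) atTop (𝓝 Q) := by
    refine (tendsto_const_nhds : Tendsto (fun _ : ℕ => Q) atTop (𝓝 Q)).congr' ?_
    filter_upwards [hφt.eventually_ge_atTop 1] with n hn
    exact (hRA Q hQT _ hn).symm
  have hQP : Q * P = Q := tendsto_nhds_unique h1' h2'
  -- P commutes with every A t, hence with Q
  have hPcommA : ∀ t, P * A t = A t * P := by
    intro t
    have c1 : Tendsto (fun n => A (φ n) * A t) atTop (𝓝 (P * A t)) := by
      have : Tendsto (fun n => A (φ n) * A t) atTop (𝓝 (P * A t)) :=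
        hAφ.mul tendsto_const_nhds
      simpa only [hAAcomm] using this
    have c2 : Tendsto (fun n => A (φ n) * A t) atTop (𝓝 (A t * P)) := by
      simp only [hAAcomm]
      exact tendsto_const_nhds.mul hAφ
    exact tendsto_nhds_unique c1 c2
  have h3 : Tendsto (fun m => P * A (ns (ms m))) atTop (𝓝 (Q * P)) := by
    simp only [hPcommA]
    exact hQ'.mul tendsto_const_nhds
  have hPQQP : P * Q = Q * P := tendsto_nhds_unique h1 h3
  have hQisP : Q = P := by
    calc Q = Q * P := hQP.symm
      _ = P * Q := hPQQP.symm
      _ = P := hPQ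
  exact ⟨ms, hQisP ▸ hQ'⟩
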